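/- Let K be an algebraically closed field with char(K) ≠ 2, g a positive integer, and α_1, …, α_{2g+1} pairwise distinct elements of K. Let a, b ∈ K satisfy b^2 = ∏_{i=1}^{2g+1}(a − α_i) and b ≠ 0. Then the set {(r_1, …, r_{2g+1}) ∈ K^{2g+1} : r_i^2 = a − α_i for all i, and ∏_{i=1}^{2g+1} r_i = −b} has exactly 2^{2g} elements. -/
import Mathlib


/-- Let `K` be algebraically closed with `char K ≠ 2`, `g ≥ 1`,
`α i` pairwise distinct, and `a, b ∈ K` with `b² = ∏ (a - α i)` and `b ≠ 0`.
Then the set of tuples `(r 1, …, r (2g+1))` with `r i² = a - α i` for all `i` and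
`∏ r i = -b` has exactly `2^(2g)` elements. -/
theorem fiber_ncard_eq_two_pow
    {K : Type*} [Field K] [IsAlgClosed K] (hK : ringChar K ≠ 2)
    (g : ℕ) (hg : 0 < g) (α : Fin (2 * g + 1) → K) (hα : Function.Injective α)
    (a b : K) (hab : b ^ 2 = ∏ i, (a - α i)) (hb : b ≠ 0) :
    Set.ncard {r : Fin (2 * g + 1) → K |
      (∀ i, r i ^ 2 = a - α i) ∧ (∏ i, r i) = -b} = 2 ^ (2 * g) := by
  classical
  set S : Set (Fin (2 * g + 1) → K) :=
    {r : Fin (2 * g + 1) → K | (∀ i, r i ^ 2 = a - α i) ∧ (∏ i, r i) = -b} with hS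
  have h2 : (2 : K) ≠ 0 := Ring.two_ne_zero hK
  have hprod_ne : (∏ i, (a - α i)) ≠ 0 := hab ▸ pow_ne_zero 2 hb
  have hne : ∀ i, a - α i ≠ 0 := fun i h =>
    hprod_ne (Finset.prod_eq_zero (Finset.mem_univ i) h)
  choose s hs using fun i : Fin (2 * g + 1) =>
    IsAlgClosed.exists_pow_nat_eq (a - α i) (n := 2) (by norm_num)
  have hs0 : ∀ i, s i ≠ 0 := fun i h => hne i (by rw [← hs i, h]; ring)
  set P : K := ∏ i, s i with hP
  have hP2 : P ^ 2 = b ^ 2 := by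
    rw [hab, hP, ← Finset.prod_pow]
    exact Finset.prod_congr rfl fun i _ => hs i
  have hP0 : P ≠ 0 := fun h => hb (by
    have hb2 : b ^ 2 = 0 := by rw [← hP2, h]; ring
    exact pow_eq_zero_iff (by norm_num) |>.mp hb2)
  set c : K := -b / P with hc
  have hcP : c * P = -b := div_mul_cancel₀ (-b) hP0
  have hc2 : c ^ 2 = 1 := by
    have h' : c ^ 2 * P ^ 2 = b ^ 2 := by
      rw [hc, div_pow, div_mul_cancel₀ _ (pow_ne_zero 2 hP0)]; ring
    rw [hP2] at h'
    exact mul_right_cancel₀ (pow_ne_zero 2 hb) (by rw [one_mul]; exact h')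
  set sgn : Bool → K := fun t => if t then 1 else -1 with hsgn
  have hsgn_sq : ∀ t, sgn t * sgn t = 1 := by intro t; cases t <;> simp [hsgn]
  have h1 : (1 : K) ≠ -1 := fun h => h2 (by linear_combination h)
  have hsgn_inj : Function.Injective sgn := by
    intro t u h
    cases t <;> cases u
    · rfl
    · exact absurd (by simpa [hsgn] using h.symm) h1
    · exact absurd (by simpa [hsgn] using h) h1
    · rfl
  -- the candidate map
  set F : (Fin (2 * g) → Bool) → (Fin (2 * g + 1) → K) := fun ε =>
    Fin.snoc (fun j => sgn (ε j) * s j.castSucc)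
      ((c * ∏ j, sgn (ε j)) * s (Fin.last (2 * g))) with hF
  have hXX : ∀ ε : Fin (2 * g) → Bool, (∏ j, sgn (ε j)) * (∏ j, sgn (ε j)) = 1 := by
    intro ε
    rw [← Finset.prod_mul_distrib]
    simp [hsgn_sq]
  have hFmem : ∀ ε, F ε ∈ S := by
    intro ε
    constructor
    · intro i
      induction i using Fin.lastCases with
      | last =>
        rw [hF]
        simp only [Fin.snoc_last]
        have h' : ((c * ∏ j, sgn (ε j)) * s (Fin.last (2 * g))) ^ 2
            = c ^ 2 * ((∏ j, sgn (ε j)) * (∏ j, sgn (ε j))) *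
              s (Fin.last (2 * g)) ^ 2 := by ring
        rw [h', hc2, hXX ε, one_mul, one_mul, hs]
      | cast j =>
        rw [hF]
        simp only [Fin.snoc_castSucc]
        have h' : (sgn (ε j) * s j.castSucc) ^ 2
            = (sgn (ε j) * sgn (ε j)) * s j.castSucc ^ 2 := by ring
        rw [h', hsgn_sq, one_mul, hs]
    · rw [hF, Fin.prod_univ_castSucc]
      simp only [Fin.snoc_castSucc, Fin.snoc_last]
      rw [Finset.prod_mul_distrib]
      have hPsplit : (∏ j : Fin (2 * g), s j.castSucc) * s (Fin.last (2 * g)) = P := by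
        rw [hP, Fin.prod_univ_castSucc]
      have hX := hXX ε
      calc (∏ j, sgn (ε j)) * (∏ j : Fin (2 * g), s j.castSucc) *
            ((c * ∏ j, sgn (ε j)) * s (Fin.last (2 * g)))
          = ((∏ j, sgn (ε j)) * (∏ j, sgn (ε j))) * c *
            ((∏ j : Fin (2 * g), s j.castSucc) * s (Fin.last (2 * g))) := by ring
        _ = -b := by rw [hX, hPsplit, one_mul, hcP]
  have hFinj : Function.Injective F := by
    intro ε ε' h
    funext j
    have hj := congrFun h j.castSucc
    rw [hF] at hj
    simp only [Fin.snoc_castSucc] at hj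
    have := mul_right_cancel₀ (hs0 j.castSucc) hj
    exact hsgn_inj this
  have hFsurj : ∀ r ∈ S, ∃ ε, F ε = r := by
    intro r hr
    obtain ⟨hr1, hr2⟩ := hr
    -- each coordinate is ± s i
    have hratio : ∀ i, r i = sgn (decide (r i = s i)) * s i := by
      intro i
      have hsq : (r i - s i) * (r i + s i) = 0 := by
        linear_combination hr1 i - hs i
      rcases mul_eq_zero.mp hsq with h | h
      · have heq : r i = s i := by linear_combination h
        have hd : decide (r i = s i) = true := decide_eq_true heq
        rw [hd, heq]; simp [hsgn]
      · have heq : r i = -s i := by linear_combination h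
        have hne' : r i ≠ s i := by
          rw [heq]
          intro hcon
          have h2s : (2 : K) * s i = 0 := by linear_combination -hcon
          rcases mul_eq_zero.mp h2s with h' | h'
          · exact h2 h'
          · exact hs0 i h'
        have hd : decide (r i = s i) = false := decide_eq_false hne'
        rw [hd, heq]; simp [hsgn]
    refine ⟨fun j => decide (r j.castSucc = s j.castSucc), ?_⟩
    funext i
    induction i using Fin.lastCases with
    | last =>
      rw [hF]
      simp only [Fin.snoc_last]
      set dL : Bool := decide (r (Fin.last (2 * g)) = s (Fin.last (2 * g))) with hdL
      set X : K := ∏ j : Fin (2 * g), sgn (decide (r j.castSucc = s j.castSucc)) with hX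
      have hX2 : X * X = 1 := hXX _
      have hlast : r (Fin.last (2 * g)) = sgn dL * s (Fin.last (2 * g)) := by
        rw [hdL]; exact hratio _
      have hsplit : ∏ i, r i = (X * sgn dL) * P := by
        rw [hP, Fin.prod_univ_castSucc (f := r), Fin.prod_univ_castSucc (f := s), hlast,
          Finset.prod_congr rfl (fun (j : Fin (2 * g)) _ => hratio j.castSucc),
          Finset.prod_mul_distrib, hX]
        ring
      rw [hr2] at hsplit
      have hkey : X * sgn dL = c :=
        mul_right_cancel₀ hP0 (by rw [hcP]; exact hsplit.symm)
      have hsgnL : sgn dL = c * X := by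
        linear_combination X * hkey - sgn dL * hX2
      rw [hlast, hsgnL]
    | cast j =>
      rw [hF]
      simp only [Fin.snoc_castSucc]
      exact (hratio j.castSucc).symm
  -- conclude by counting
  have hbij : Function.Bijective (fun ε : Fin (2 * g) → Bool => (⟨F ε, hFmem ε⟩ : S)) := by
    constructor
    · intro ε ε' h
      exact hFinj (congrArg Subtype.val h)
    · rintro ⟨r, hr⟩
      obtain ⟨ε, hε⟩ := hFsurj r hr
      exact ⟨ε, Subtype.ext hε⟩
  have hcard := Nat.card_eq_of_bijective _ hbij
  rw [← Nat.card_coe_set_eq, ← hcard]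
  simp [Nat.card_eq_fintype_card]
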